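/- Let m, n ≥ 1, let s₀, …, s_m, t₀, …, t_n ∈ Σ* and u₁, …, u_m, v₁, …, v_n ∈ Σ⁺ be words over a finite set Σ of positive integers, and for i ∈ ℕ define U_i = s₀ u₁^i s₁ u₂^i s₂ ⋯ u_m^i s_m and V_i = t₀ v₁^i t₁ v₂^i t₂ ⋯ v_n^i t_n. If U_i = V_i holds for at least m + n distinct values of i ∈ ℕ, then U_i = V_i holds for all i ∈ ℕ. -/

import Mathlib

open Polynomial

/-- Concatenation power of a word. -/
def wpow {α : Type*} (u : List α) : ℕ → List α
  | 0 => []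
  | k + 1 => u ++ wpow u k

/-- The characteristic polynomial `P(w)` of a word. -/
noncomputable def wordPoly (w : List ℕ) : Polynomial ℤ :=
  ∑ i ∈ Finset.range w.length, Polynomial.C (w.getD i 0 : ℤ) * Polynomial.X ^ i

/-- A nonempty word is primitive if it is not a proper power. -/
def Primitive (w : List ℕ) : Prop :=
  w ≠ [] ∧ ∀ (u : List ℕ) (k : ℕ), 1 < k → w ≠ wpow u k

namespace PowEq

/-- base-`b` value of a word (little-endian), over ℕ. -/
def vN (b : ℕ) : List ℕ → ℕ
  | [] => 0
  | a :: w => a + b * vN b w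

/-- base-`b` value of a word, over ℝ. -/
def vR (b : ℝ) : List ℕ → ℝ
  | [] => 0
  | a :: w => a + b * vR b w

lemma vR_cast (b : ℕ) (w : List ℕ) : vR (b : ℝ) w = (vN b w : ℝ) := by
  induction w with
  | nil => simp [vR, vN]
  | cons a w ih => simp [vR, vN, ih]

lemma vN_inj (b : ℕ) (hb : 0 < b) : ∀ (w1 w2 : List ℕ), w1.length = w2.length →
    (∀ a ∈ w1, a < b) → (∀ a ∈ w2, a < b) → vN b w1 = vN b w2 → w1 = w2 := by
  intro w1
  induction w1 with
  | nil => intro w2 hl _ _ _; cases w2 with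
    | nil => rfl
    | cons a w => simp at hl
  | cons a w ih =>
    intro w2 hl h1 h2 hv
    cases w2 with
    | nil => simp at hl
    | cons a' w' =>
      have ha : a < b := h1 a (by simp)
      have ha' : a' < b := h2 a' (by simp)
      simp only [vN] at hv
      have hmod : a % b = a' % b := by
        have := congrArg (· % b) hv
        simpa [Nat.add_mul_mod_self_left] using this
      rw [Nat.mod_eq_of_lt ha, Nat.mod_eq_of_lt ha'] at hmod
      subst hmod
      have hw : vN b w = vN b w' := by
        have : b * vN b w = b * vN b w' := by omega
        exact Nat.eq_of_mul_eq_mul_left hb this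
      have := ih w' (by simpa using hl) (fun x hx => h1 x (by simp [hx]))
        (fun x hx => h2 x (by simp [hx])) hw
      rw [this]

lemma vR_append (b : ℝ) (w1 w2 : List ℕ) :
    vR b (w1 ++ w2) = vR b w1 + b ^ w1.length * vR b w2 := by
  induction w1 with
  | nil => simp [vR]
  | cons a w ih => simp [vR, ih, pow_succ]; ring

lemma length_wpow {α : Type*} (u : List α) (i : ℕ) : (wpow u i).length = i * u.length := by
  induction i with
  | zero => simp [wpow]
  | succ k ih => simp [wpow, ih]; ring

lemma mem_wpow {α : Type*} {u : List α} {i : ℕ} {a : α} (h : a ∈ wpow u i) : a ∈ u := by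
  induction i with
  | zero => simp [wpow] at h
  | succ k ih => simp [wpow] at h; rcases h with h | h; exact h; exact ih h

lemma vR_wpow (b : ℝ) (u : List ℕ) (i : ℕ) :
    vR b (wpow u i) = vR b u * ∑ k ∈ Finset.range i, (b ^ u.length) ^ k := by
  induction i with
  | zero => simp [wpow, vR]
  | succ k ih =>
    rw [show wpow u (k+1) = u ++ wpow u k from rfl, vR_append, ih, geom_sum_succ]
    ring

lemma length_flat (g : ℕ → List ℕ) (m : ℕ) :
    (((List.range m).map g).flatten).length = ∑ k ∈ Finset.range m, (g k).length := by
  induction m with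
  | zero => simp
  | succ k ih => rw [List.range_succ]; simp [ih, Finset.sum_range_succ]

lemma vR_flat (b : ℝ) (g : ℕ → List ℕ) (m : ℕ) :
    vR b (((List.range m).map g).flatten) =
      ∑ j ∈ Finset.range m, b ^ (∑ k ∈ Finset.range j, (g k).length) * vR b (g j) := by
  induction m with
  | zero => simp [vR]
  | succ k ih =>
    rw [List.range_succ, List.map_append, List.flatten_append, vR_append, ih, length_flat,
      Finset.sum_range_succ]
    simp [vR_append, vR]

lemma ofFn_eq_map {α : Type*} {m : ℕ} (f : Fin m → List α) (g : ℕ → List α)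
    (hfg : ∀ j : Fin m, f j = g j.val) : List.ofFn f = (List.range m).map g := by
  apply List.ext_getElem (by simp)
  intro k h1 h2
  simp only [List.getElem_ofFn, List.getElem_map, List.getElem_range]
  rw [hfg]

lemma supp_sum {α : Type*} (s : Finset α) (f : α → Polynomial ℝ) [DecidableEq α] :
    (∑ i ∈ s, f i).support ⊆ s.biUnion fun i => (f i).support := by
  classical
  induction s using Finset.induction_on with
  | empty => simp
  | insert _ _ hx ih =>
    rw [Finset.sum_insert hx]
    refine Polynomial.support_add.trans ?_
    rw [Finset.biUnion_insert]
    exact Finset.union_subset_union (le_refl _) ih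

lemma descartes : ∀ (N : ℕ) (P : Polynomial ℝ) (x : Finset ℝ),
    (∀ a ∈ x, 0 < a) → (∀ a ∈ x, P.eval a = 0) → P.support.card ≤ x.card → x.card = N →
    P = 0 := by
  intro N
  induction N with
  | zero =>
    intro P x _ _ hcard hN
    rw [hN, Nat.le_zero, Finset.card_eq_zero] at hcard
    exact Polynomial.support_eq_empty.mp hcard
  | succ N ih =>
    intro P x hpos hroot hcard hN
    by_contra hP
    obtain ⟨e0, he0⟩ := Polynomial.nonempty_support_iff.mpr hP
    set h : Polynomial ℝ := X * Polynomial.derivative P - Polynomial.C (e0 : ℝ) * P with hh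
    have hcoeff : ∀ d, h.coeff d = ((d : ℝ) - e0) * P.coeff d := by
      intro d
      rcases d with _ | d'
      · simp [hh, Polynomial.mul_coeff_zero, Polynomial.coeff_C_mul]
      · simp [hh, Polynomial.coeff_X_mul, Polynomial.coeff_derivative, Polynomial.coeff_C_mul]
        ring
    have hsupp : h.support ⊆ P.support.erase e0 := by
      intro d hd
      rw [Polynomial.mem_support_iff, hcoeff] at hd
      refine Finset.mem_erase.mpr ⟨?_, Polynomial.mem_support_iff.mpr ?_⟩
      · intro h'; apply hd; subst h'; ring
      · intro h'; apply hd; rw [h']; ring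
    set σ := x.orderIsoOfFin hN with hσ
    have hposσ : ∀ j : Fin (N+1), (0:ℝ) < (σ j : ℝ) := fun j => hpos _ (σ j).2
    have hroots : ∀ j : Fin N, ∃ c, ((σ j.castSucc : ℝ) < c ∧ c < (σ j.succ : ℝ)) ∧
        h.eval c = 0 := by
      intro j
      have hab : ((σ j.castSucc : ℝ)) < (σ j.succ : ℝ) := by
        exact_mod_cast σ.strictMono (Fin.castSucc_lt_succ : j.castSucc < j.succ)
      have hapos : (0:ℝ) < (σ j.castSucc : ℝ) := hposσ _
      obtain ⟨c, hc, hc0⟩ := exists_hasDerivAt_eq_zero (a := (σ j.castSucc : ℝ))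
        (b := (σ j.succ : ℝ))
        (f := fun t : ℝ => P.eval t * t ^ (-(e0:ℝ)))
        (f' := fun t : ℝ => (Polynomial.derivative P).eval t * t ^ (-(e0:ℝ)) +
          P.eval t * (-(e0:ℝ) * t ^ (-(e0:ℝ) - 1)))
        hab
        (by
          apply ContinuousOn.mul ((Polynomial.continuous P).continuousOn)
          apply ContinuousOn.rpow_const continuousOn_id
          intro t ht
          exact Or.inl (ne_of_gt (lt_of_lt_of_le hapos ht.1)))
        (by
          have h1 := hroot _ (σ j.castSucc).2
          have h2 := hroot _ (σ j.succ).2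
          simp only [h1, h2, zero_mul])
        (by
          intro t ht
          exact (P.hasDerivAt t).mul (Real.hasDerivAt_rpow_const
            (Or.inl (ne_of_gt (lt_trans hapos ht.1)))))
      refine ⟨c, hc, ?_⟩
      have hcpos : (0:ℝ) < c := lt_trans hapos hc.1
      have e1 : c ^ (-(e0:ℝ)) * c ^ ((e0:ℝ)+1) = c := by
        rw [← Real.rpow_add hcpos]; norm_num
      have e2 : c ^ (-(e0:ℝ) - 1) * c ^ ((e0:ℝ)+1) = 1 := by
        rw [← Real.rpow_add hcpos]; norm_num
      have expand : h.eval c = c * (Polynomial.derivative P).eval c - (e0:ℝ) * P.eval c := by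
        rw [hh]
        simp only [Polynomial.eval_sub, Polynomial.eval_mul, Polynomial.eval_X,
          Polynomial.eval_C]
      rw [expand]
      linear_combination c ^ ((e0:ℝ)+1) * hc0 - (Polynomial.derivative P).eval c * e1 +
        (e0:ℝ) * P.eval c * e2
    choose c hc1 hc3 using hroots
    have hcmono : StrictMono c := by
      intro j k hjk
      calc c j < (σ j.succ : ℝ) := (hc1 j).2
        _ ≤ (σ k.castSucc : ℝ) := by
            have hle : (j.succ : Fin (N+1)) ≤ k.castSucc := by
              rw [Fin.le_def]; simp only [Fin.val_succ, Fin.coe_castSucc]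
              exact hjk
            exact_mod_cast σ.monotone hle
        _ < c k := (hc1 k).1
    have himg : (Finset.image c Finset.univ).card = N := by
      rw [Finset.card_image_of_injective _ hcmono.injective, Finset.card_univ, Fintype.card_fin]
    have hzero : h = 0 := by
      refine ih h (Finset.image c Finset.univ) ?_ ?_ ?_ himg
      · intro a ha
        obtain ⟨j, _, rfl⟩ := Finset.mem_image.mp ha
        exact lt_trans (hposσ j.castSucc) (hc1 j).1
      · intro a ha
        obtain ⟨j, _, rfl⟩ := Finset.mem_image.mp ha
        exact hc3 j
      · rw [himg]
        calc h.support.card ≤ (P.support.erase e0).card := Finset.card_le_card hsupp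
          _ = P.support.card - 1 := Finset.card_erase_of_mem he0
          _ ≤ N := by omega
    have hPsub : P.support ⊆ {e0} := by
      intro d hd
      rw [Polynomial.mem_support_iff] at hd
      rw [Finset.mem_singleton]
      by_contra hne
      have : h.coeff d = 0 := by rw [hzero]; simp
      rw [hcoeff] at this
      rcases mul_eq_zero.mp this with h' | h'
      · exact hne (Nat.cast_injective (by linarith : ((d:ℝ)) = e0))
      · exact hd h'
    obtain ⟨a, ha⟩ : x.Nonempty := Finset.card_pos.mp (by omega)
    have heval : P.eval a = P.coeff e0 * a ^ e0 := by
      rw [Polynomial.eval_eq_sum, Polynomial.sum_def]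
      rw [Finset.sum_subset hPsub]
      · simp
      · intro d _ hd
        rw [Polynomial.notMem_support_iff.mp hd]; ring
    have := hroot a ha
    rw [heval] at this
    have hapos := hpos a ha
    have : P.coeff e0 = 0 := by
      rcases mul_eq_zero.mp this with h' | h'
      · exact h'
      · exact absurd h' (ne_of_gt (pow_pos hapos e0))
    exact Polynomial.mem_support_iff.mp he0 this

def AA (gs : ℕ → List ℕ) (j : ℕ) : ℕ := ∑ k ∈ Finset.range j, (gs k).length

def BB (gu : ℕ → List ℕ) (j : ℕ) : ℕ := ∑ k ∈ Finset.range j, (gu k).length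

noncomputable def coefα (b : ℕ) (gs : ℕ → List ℕ) (j : ℕ) : ℝ :=
  (b:ℝ) ^ (AA gs j) * vR b (gs j)

noncomputable def coefβ (b : ℕ) (gs gu : ℕ → List ℕ) (j : ℕ) : ℝ :=
  (b:ℝ) ^ (AA gs j + (gs j).length) * vR b (gu j) / ((b:ℝ) ^ ((gu j).length) - 1)

noncomputable def PP (b : ℕ) (gs gu : ℕ → List ℕ) (m : ℕ) : Polynomial ℝ :=
  (∑ j ∈ Finset.range m, (C (coefα b gs j) * X ^ (BB gu j) +
      C (coefβ b gs gu j) * (X ^ (BB gu (j+1)) - X ^ (BB gu j)))) +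
    C (coefα b gs m) * X ^ (BB gu m)

lemma val_PP (b : ℕ) (hb : 2 ≤ b) (gs gu : ℕ → List ℕ) (m : ℕ)
    (hgu : ∀ k, k < m → (gu k).length ≠ 0) (i : ℕ) :
    vR (b:ℝ) (((List.range m).map (fun k => gs k ++ wpow (gu k) i)).flatten ++ gs m) =
      (PP b gs gu m).eval ((b:ℝ) ^ i) := by
  have hbR : (1:ℝ) < (b:ℝ) := by exact_mod_cast (by omega : 1 < b)
  have hexp : ∀ j, ∑ k ∈ Finset.range j, (gs k ++ wpow (gu k) i).length
      = AA gs j + i * BB gu j := by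
    intro j
    simp only [List.length_append, length_wpow]
    rw [Finset.sum_add_distrib, ← Finset.mul_sum]
    rfl
  rw [vR_append, vR_flat, length_flat, PP]
  rw [Polynomial.eval_add, Polynomial.eval_finset_sum]
  simp only [Polynomial.eval_add, Polynomial.eval_mul, Polynomial.eval_sub, Polynomial.eval_C,
    Polynomial.eval_pow, Polynomial.eval_X]
  congr 1
  · apply Finset.sum_congr rfl
    intro j hj
    rw [Finset.mem_range] at hj
    have hl : (gu j).length ≠ 0 := hgu j hj
    have hx1 : ((b:ℝ)) ^ ((gu j).length) ≠ 1 := ne_of_gt (one_lt_pow₀ hbR hl)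
    have hxne : ((b:ℝ)) ^ ((gu j).length) - 1 ≠ 0 := sub_ne_zero.mpr hx1
    have hBsucc : BB gu (j+1) = BB gu j + (gu j).length := Finset.sum_range_succ _ _
    have hcomm : ((b:ℝ) ^ i) ^ ((gu j).length) = ((b:ℝ) ^ ((gu j).length)) ^ i :=
      pow_right_comm _ _ _
    rw [hexp, vR_append, vR_wpow, geom_sum_eq hx1 i, hBsucc]
    simp only [coefα, coefβ, pow_add, pow_mul, hcomm]
    field_simp
  · rw [hexp, coefα]
    simp only [pow_add, pow_mul]
    ring

lemma supp_PP (b : ℕ) (gs gu : ℕ → List ℕ) (m : ℕ) :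
    (PP b gs gu m).support ⊆ (Finset.range (m+1)).image (BB gu) := by
  classical
  have hmem : ∀ j, j ≤ m → BB gu j ∈ (Finset.range (m+1)).image (BB gu) := by
    intro j hj
    exact Finset.mem_image.mpr ⟨j, Finset.mem_range.mpr (by omega), rfl⟩
  rw [PP]
  refine Polynomial.support_add.trans (Finset.union_subset ?_ ?_)
  · refine (supp_sum _ _).trans ?_
    intro d hd
    rw [Finset.mem_biUnion] at hd
    obtain ⟨j, hj, hd⟩ := hd
    rw [Finset.mem_range] at hj
    have hsub : (C (coefα b gs j) * X ^ BB gu j +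
        C (coefβ b gs gu j) * (X ^ BB gu (j+1) - X ^ BB gu j)).support
        ⊆ {BB gu j} ∪ ({BB gu (j+1)} ∪ {BB gu j}) := by
      refine Polynomial.support_add.trans (Finset.union_subset_union
        (Polynomial.support_C_mul_X_pow' _ _) ?_)
      rw [mul_sub, sub_eq_add_neg]
      refine Polynomial.support_add.trans (Finset.union_subset_union
        (Polynomial.support_C_mul_X_pow' _ _) ?_)
      rw [Polynomial.support_neg]
      exact Polynomial.support_C_mul_X_pow' _ _
    have := hsub hd
    simp only [Finset.mem_union, Finset.mem_singleton] at this
    rcases this with h | h | h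
    · rw [h]; exact hmem j (by omega)
    · rw [h]; exact hmem (j+1) (by omega)
    · rw [h]; exact hmem j (by omega)
  · refine (Polynomial.support_C_mul_X_pow' _ _).trans ?_
    intro d hd
    rw [Finset.mem_singleton] at hd
    rw [hd]; exact hmem m le_rfl

lemma length_W (gs gu : ℕ → List ℕ) (m i : ℕ) :
    (((List.range m).map (fun k => gs k ++ wpow (gu k) i)).flatten ++ gs m).length
      = (AA gs m + (gs m).length) + i * BB gu m := by
  rw [List.length_append, length_flat]
  simp only [List.length_append, length_wpow]
  rw [Finset.sum_add_distrib, ← Finset.mul_sum]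
  show _ + _ + _ = AA gs m + (gs m).length + i * BB gu m
  rw [AA, BB]
  ring

end PowEq

theorem power_equation_all_of_finitely_many
    (S : Finset ℕ) (hS : ∀ a ∈ S, 0 < a)
    (m n : ℕ) (hm : 1 ≤ m) (hn : 1 ≤ n)
    (s : Fin (m + 1) → List ℕ) (t : Fin (n + 1) → List ℕ)
    (u : Fin m → List ℕ) (v : Fin n → List ℕ)
    (hs : ∀ j, ∀ a ∈ s j, a ∈ S) (ht : ∀ j, ∀ a ∈ t j, a ∈ S)
    (hua : ∀ j, ∀ a ∈ u j, a ∈ S) (hva : ∀ j, ∀ a ∈ v j, a ∈ S)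
    (hu0 : ∀ j, u j ≠ []) (hv0 : ∀ j, v j ≠ [])
    (U V : ℕ → List ℕ)
    (hU : ∀ i, U i =
      (List.ofFn fun j : Fin m => s j.castSucc ++ wpow (u j) i).flatten ++ s (Fin.last m))
    (hV : ∀ i, V i =
      (List.ofFn fun j : Fin n => t j.castSucc ++ wpow (v j) i).flatten ++ t (Fin.last n))
    (T : Finset ℕ) (hT : m + n ≤ T.card) (hUV : ∀ i ∈ T, U i = V i) :
    ∀ i : ℕ, U i = V i := by
  classical
  obtain ⟨i1, hi1, i2, hi2, hne12⟩ := Finset.one_lt_card.mp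
    (lt_of_lt_of_le (by omega) hT)
  set b : ℕ := S.sup id + 2 with hbdef
  have hb2 : 2 ≤ b := by omega
  have hSb : ∀ a ∈ S, a < b := fun a ha =>
    lt_of_le_of_lt (Finset.le_sup (f := id) ha) (by omega)
  set gs : ℕ → List ℕ := fun k => if h : k < m + 1 then s ⟨k, h⟩ else [] with hgs
  set gu : ℕ → List ℕ := fun k => if h : k < m then u ⟨k, h⟩ else [] with hgu
  set gt' : ℕ → List ℕ := fun k => if h : k < n + 1 then t ⟨k, h⟩ else [] with hgt2
  set gv : ℕ → List ℕ := fun k => if h : k < n then v ⟨k, h⟩ else [] with hgv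
  have hgsS : ∀ k, ∀ a ∈ gs k, a ∈ S := by
    intro k a ha
    rw [hgs] at ha; dsimp only at ha
    split at ha
    · exact hs _ _ ha
    · simp at ha
  have hgtS : ∀ k, ∀ a ∈ gt' k, a ∈ S := by
    intro k a ha
    rw [hgt2] at ha; dsimp only at ha
    split at ha
    · exact ht _ _ ha
    · simp at ha
  have hguS : ∀ k, ∀ a ∈ gu k, a ∈ S := by
    intro k a ha
    rw [hgu] at ha; dsimp only at ha
    split at ha
    · exact hua _ _ ha
    · simp at ha
  have hgvS : ∀ k, ∀ a ∈ gv k, a ∈ S := by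
    intro k a ha
    rw [hgv] at ha; dsimp only at ha
    split at ha
    · exact hva _ _ ha
    · simp at ha
  have hguNe : ∀ k, k < m → (gu k).length ≠ 0 := by
    intro k hk
    rw [hgu]; dsimp only; rw [dif_pos hk]
    simpa using hu0 ⟨k, hk⟩
  have hgvNe : ∀ k, k < n → (gv k).length ≠ 0 := by
    intro k hk
    rw [hgv]; dsimp only; rw [dif_pos hk]
    simpa using hv0 ⟨k, hk⟩
  have hU' : ∀ i, U i =
      ((List.range m).map (fun k => gs k ++ wpow (gu k) i)).flatten ++ gs m := by
    intro i
    rw [hU i]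
    congr 1
    · refine congrArg List.flatten (PowEq.ofFn_eq_map _ _ ?_)
      intro j
      rw [hgs, hgu]; dsimp only
      rw [dif_pos (Nat.lt_succ_of_lt j.isLt), dif_pos j.isLt]
      rfl
    · rw [hgs]; dsimp only
      rw [dif_pos (Nat.lt_succ_self m)]
      rfl
  have hV' : ∀ i, V i =
      ((List.range n).map (fun k => gt' k ++ wpow (gv k) i)).flatten ++ gt' n := by
    intro i
    rw [hV i]
    congr 1
    · refine congrArg List.flatten (PowEq.ofFn_eq_map _ _ ?_)
      intro j
      rw [hgt2, hgv]; dsimp only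
      rw [dif_pos (Nat.lt_succ_of_lt j.isLt), dif_pos j.isLt]
      rfl
    · rw [hgt2]; dsimp only
      rw [dif_pos (Nat.lt_succ_self n)]
      rfl
  have hlen1 : ∀ i, (U i).length = (PowEq.AA gs m + (gs m).length) + i * PowEq.BB gu m :=
    fun i => by rw [hU' i, PowEq.length_W]
  have hlen2 : ∀ i, (V i).length = (PowEq.AA gt' n + (gt' n).length) + i * PowEq.BB gv n :=
    fun i => by rw [hV' i, PowEq.length_W]
  have hlena : (PowEq.AA gs m + (gs m).length) + i1 * PowEq.BB gu m
      = (PowEq.AA gt' n + (gt' n).length) + i1 * PowEq.BB gv n := by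
    rw [← hlen1, ← hlen2, hUV i1 hi1]
  have hlenb : (PowEq.AA gs m + (gs m).length) + i2 * PowEq.BB gu m
      = (PowEq.AA gt' n + (gt' n).length) + i2 * PowEq.BB gv n := by
    rw [← hlen1, ← hlen2, hUV i2 hi2]
  have hBD : PowEq.BB gu m = PowEq.BB gv n := by
    have h1 : ((PowEq.AA gs m + (gs m).length : ℕ) : ℤ) + (i1:ℤ) * (PowEq.BB gu m : ℤ)
        = ((PowEq.AA gt' n + (gt' n).length : ℕ) : ℤ) + (i1:ℤ) * (PowEq.BB gv n : ℤ) := by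
      exact_mod_cast hlena
    have h2 : ((PowEq.AA gs m + (gs m).length : ℕ) : ℤ) + (i2:ℤ) * (PowEq.BB gu m : ℤ)
        = ((PowEq.AA gt' n + (gt' n).length : ℕ) : ℤ) + (i2:ℤ) * (PowEq.BB gv n : ℤ) := by
      exact_mod_cast hlenb
    have h3 : ((i1:ℤ) - (i2:ℤ)) * ((PowEq.BB gu m : ℤ) - (PowEq.BB gv n : ℤ)) = 0 := by
      linear_combination h1 - h2
    have hi : (i1:ℤ) - i2 ≠ 0 := sub_ne_zero.mpr (by exact_mod_cast hne12)
    have := sub_eq_zero.mp ((mul_eq_zero.mp h3).resolve_left hi)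
    exact_mod_cast this
  have hAC : PowEq.AA gs m + (gs m).length = PowEq.AA gt' n + (gt' n).length := by
    rw [hBD] at hlena
    omega
  have hlenUV : ∀ i, (U i).length = (V i).length := fun i => by
    rw [hlen1, hlen2, hBD, hAC]
  -- the polynomial
  set P : Polynomial ℝ := PowEq.PP b gs gu m - PowEq.PP b gt' gv n with hPdef
  have hvalU : ∀ i, PowEq.vR (b:ℝ) (U i) = (PowEq.PP b gs gu m).eval ((b:ℝ) ^ i) := fun i => by
    rw [hU' i]; exact PowEq.val_PP b hb2 gs gu m hguNe i
  have hvalV : ∀ i, PowEq.vR (b:ℝ) (V i) = (PowEq.PP b gt' gv n).eval ((b:ℝ) ^ i) := fun i => by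
    rw [hV' i]; exact PowEq.val_PP b hb2 gt' gv n hgvNe i
  have hbR : (1:ℝ) < (b:ℝ) := by exact_mod_cast (by omega : 1 < b)
  have hbR0 : (0:ℝ) < (b:ℝ) := by positivity
  set x : Finset ℝ := T.image (fun i => ((b:ℝ)) ^ i) with hxdef
  have hinj : Function.Injective (fun i : ℕ => ((b:ℝ)) ^ i) := by
    have hsm : StrictMono (fun i : ℕ => ((b:ℝ)) ^ i) := fun p q h => by
      exact pow_lt_pow_right₀ hbR h
    exact hsm.injective
  have hxcard : x.card = T.card := Finset.card_image_of_injective _ hinj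
  -- support bound
  have hsupport : P.support.card ≤ m + n := by
    set imA := (Finset.range (m+1)).image (PowEq.BB gu) with himA
    set imB := (Finset.range (n+1)).image (PowEq.BB gv) with himB
    have hsub : P.support ⊆ imA ∪ imB := by
      rw [hPdef, sub_eq_add_neg]
      refine Polynomial.support_add.trans (Finset.union_subset_union (PowEq.supp_PP _ _ _ _) ?_)
      rw [Polynomial.support_neg]
      exact PowEq.supp_PP _ _ _ _
    have hB0u : PowEq.BB gu 0 = 0 := by simp [PowEq.BB]
    have hB0v : PowEq.BB gv 0 = 0 := by simp [PowEq.BB]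
    have hBm0 : PowEq.BB gu m ≠ 0 := by
      have h1 : (gu 0).length ≠ 0 := hguNe 0 hm
      have hle : (gu 0).length ≤ PowEq.BB gu m := by
        rw [PowEq.BB]
        exact Finset.single_le_sum (f := fun k => (gu k).length) (fun _ _ => Nat.zero_le _) (Finset.mem_range.mpr hm)
      omega
    have hpairA : ({0, PowEq.BB gu m} : Finset ℕ) ⊆ imA := by
      rw [Finset.insert_subset_iff, Finset.singleton_subset_iff]
      constructor
      · rw [← hB0u]
        exact Finset.mem_image.mpr ⟨0, Finset.mem_range.mpr (by omega), rfl⟩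
      · exact Finset.mem_image.mpr ⟨m, Finset.mem_range.mpr (by omega), rfl⟩
    have hpairB : ({0, PowEq.BB gu m} : Finset ℕ) ⊆ imB := by
      rw [Finset.insert_subset_iff, Finset.singleton_subset_iff]
      constructor
      · rw [← hB0v]
        exact Finset.mem_image.mpr ⟨0, Finset.mem_range.mpr (by omega), rfl⟩
      · rw [hBD]
        exact Finset.mem_image.mpr ⟨n, Finset.mem_range.mpr (by omega), rfl⟩
    have hpaircard : ({0, PowEq.BB gu m} : Finset ℕ).card = 2 := by
      rw [Finset.card_insert_of_notMem (by simpa using Ne.symm hBm0), Finset.card_singleton]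
    have hcardA : imA.card ≤ m + 1 := Finset.card_image_le.trans (by simp)
    have hcardB : imB.card ≤ n + 1 := Finset.card_image_le.trans (by simp)
    have hsd : (imB \ imA).card ≤ n - 1 := by
      have h1 : imB \ imA ⊆ imB \ {0, PowEq.BB gu m} :=
        Finset.sdiff_subset_sdiff (Finset.Subset.refl _) hpairA
      have h2 := Finset.card_sdiff_of_subset hpairB
      have h3 := Finset.card_le_card h1
      omega
    calc P.support.card ≤ (imA ∪ imB).card := Finset.card_le_card hsub
      _ = (imA ∪ (imB \ imA)).card := by rw [Finset.union_sdiff_self_eq_union]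
      _ ≤ imA.card + (imB \ imA).card := Finset.card_union_le _ _
      _ ≤ (m + 1) + (n - 1) := add_le_add hcardA hsd
      _ ≤ m + n := by omega
  have hP0 : P = 0 := by
    refine PowEq.descartes T.card P x ?_ ?_ ?_ hxcard
    · intro a ha
      obtain ⟨i, _, rfl⟩ := Finset.mem_image.mp ha
      positivity
    · intro a ha
      obtain ⟨i, hiT, rfl⟩ := Finset.mem_image.mp ha
      rw [hPdef, Polynomial.eval_sub, ← hvalU, ← hvalV, hUV i hiT, sub_self]
    · rw [hxcard]
      omega
  intro i
  have hval0 : PowEq.vR (b:ℝ) (U i) = PowEq.vR (b:ℝ) (V i) := by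
    have h0 : P.eval ((b:ℝ) ^ i) = 0 := by rw [hP0]; simp
    rw [hPdef, Polynomial.eval_sub, sub_eq_zero] at h0
    rw [hvalU, hvalV, h0]
  have hvN : PowEq.vN b (U i) = PowEq.vN b (V i) := by
    have h0 := hval0
    rw [PowEq.vR_cast, PowEq.vR_cast] at h0
    exact_mod_cast h0
  refine PowEq.vN_inj b (by omega) _ _ (hlenUV i) ?_ ?_ hvN
  · intro a ha
    apply hSb
    rw [hU' i] at ha
    rcases List.mem_append.mp ha with h | h
    · obtain ⟨l, hl, hal⟩ := List.mem_flatten.mp h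
      obtain ⟨k, hk, rfl⟩ := List.mem_map.mp hl
      rcases List.mem_append.mp hal with h' | h'
      · exact hgsS k a h'
      · exact hguS k a (PowEq.mem_wpow h')
    · exact hgsS m a h
  · intro a ha
    apply hSb
    rw [hV' i] at ha
    rcases List.mem_append.mp ha with h | h
    · obtain ⟨l, hl, hal⟩ := List.mem_flatten.mp h
      obtain ⟨k, hk, rfl⟩ := List.mem_map.mp hl
      rcases List.mem_append.mp hal with h' | h'
      · exact hgtS k a h'
      · exact hgvS k a (PowEq.mem_wpow h')
    · exact hgtS n a h
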